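/- Let G ∈ K^{d×d} be Hermitian positive semidefinite and let D ∈ K^{d×n}. Then for every J ⊆ {1,…,n} with |J| ≤ s, every eigenvalue λ of the Hermitian matrix D_J* G D_J satisfies λ_min(G)·(1 − δ_s(D)) ≤ λ ≤ ‖G‖·(1 + δ_s(D)), where λ_min(G) is the smallest eigenvalue of G. Consequently, if δ_s(D) < 1, then θ_s(D*GD) ≤ max( ‖G‖·(1 + δ_s(D)) − 1, 1 − λ_min(G)·(1 − δ_s(D)) ). -/

import Mathlib

open scoped BigOperators
open Matrix MeasureTheory

noncomputable section

namespace ObliquePursuit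

variable {𝕜 : Type*} [RCLike 𝕜]

/-- The Euclidean (`ℓ²`) norm of a finitely indexed vector. -/
def l2 {ι : Type*} [Fintype ι] (x : ι → 𝕜) : ℝ :=
  Real.sqrt (∑ i, ‖x i‖ ^ 2)

/-- The spectral (`ℓ² → ℓ²` operator) norm of a matrix. -/
def specNorm {ι κ : Type*} [Fintype ι] [Fintype κ] [DecidableEq κ]
    (M : Matrix ι κ 𝕜) : ℝ :=
  ‖LinearMap.toContinuousLinearMap (Matrix.toEuclideanLin M)‖

/-- `x` is `s`-sparse: it has at most `s` nonzero entries. -/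
def Sparse {ι : Type*} (s : ℕ) (x : ι → 𝕜) : Prop :=
  ∃ J : Finset ι, J.card ≤ s ∧ ∀ i, x i ≠ 0 → i ∈ J

/-- The `s`-restricted biorthogonality constant `θ_s(M)`: the smallest `δ ≥ 0` such that
`|⟨y, Mx⟩ − ⟨y, x⟩| ≤ δ‖x‖₂‖y‖₂` for all `x, y` supported on a common index set of
cardinality at most `s`. -/
def theta {ι : Type*} [Fintype ι] (s : ℕ) (M : Matrix ι ι 𝕜) : ℝ :=
  sInf {δ : ℝ | 0 ≤ δ ∧ ∀ J : Finset ι, J.card ≤ s →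
    ∀ x y : ι → 𝕜, (∀ i, x i ≠ 0 → i ∈ J) → (∀ i, y i ≠ 0 → i ∈ J) →
      ‖star y ⬝ᵥ M.mulVec x - star y ⬝ᵥ x‖ ≤ δ * l2 x * l2 y}

/-- The `s`-restricted isometry constant `δ_s(Ψ)`. -/
def ric {ι κ : Type*} [Fintype ι] [Fintype κ] (s : ℕ) (Ψ : Matrix ι κ 𝕜) : ℝ :=
  sInf {δ : ℝ | 0 ≤ δ ∧ ∀ x : κ → 𝕜, Sparse s x →
    (1 - δ) * l2 x ^ 2 ≤ l2 (Ψ.mulVec x) ^ 2 ∧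
      l2 (Ψ.mulVec x) ^ 2 ≤ (1 + δ) * l2 x ^ 2}

/-- Coordinate projection `Π_J`: keep the entries indexed by `J`, zero out the others. -/
def proj {ι : Type*} [DecidableEq ι] (J : Finset ι) (x : ι → 𝕜) : ι → 𝕜 :=
  fun i => if i ∈ J then x i else 0

/-- The column submatrix `Ψ_J` of `Ψ` formed by the columns indexed by `J`. -/
def cols {ι κ : Type*} (Ψ : Matrix ι κ 𝕜) (J : Finset κ) :
    Matrix ι {j // j ∈ J} 𝕜 :=
  Ψ.submatrix id fun j => (j : κ)

/-- The `j`-th column of `Ψ`. -/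
def col {ι κ : Type*} (Ψ : Matrix ι κ 𝕜) (j : κ) : ι → 𝕜 :=
  fun i => Ψ i j

/-- The complementary oblique projector `E = I − Ψ_J (Ψ̃_J^* Ψ_J)⁻¹ Ψ̃_J^*`
(equal to `I` when `J = ∅`). -/
def obliqueE {ι κ : Type*} [Fintype ι] [DecidableEq ι] [DecidableEq κ]
    (Ψ Ψt : Matrix ι κ 𝕜) (J : Finset κ) : Matrix ι ι 𝕜 :=
  1 - cols Ψ J * ((cols Ψt J)ᴴ * cols Ψ J)⁻¹ * (cols Ψt J)ᴴ

/-- The smallest (real) eigenvalue of a matrix. -/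
def lamMin {ι : Type*} [Fintype ι] (G : Matrix ι ι 𝕜) : ℝ :=
  sInf {r : ℝ | ∃ v : ι → 𝕜, v ≠ 0 ∧ G.mulVec v = (r : 𝕜) • v}

/-- The `j`-th largest singular value (1-indexed) of a matrix, characterized via the
Eckart–Young–Mirsky theorem: `σ_j(A) = min { ‖A − B‖ : rank B < j }` where `‖·‖` is the
spectral norm. -/
def singVal {ι κ : Type*} [Fintype ι] [Fintype κ] [DecidableEq κ]
    (A : Matrix ι κ 𝕜) (j : ℕ) : ℝ :=
  sInf {r : ℝ | ∃ B : Matrix ι κ 𝕜, B.rank < j ∧ r = specNorm (A - B)}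

-- ===== auxiliary lemmas =====
section Aux
open scoped ComplexOrder
variable {ι κ : Type*} [Fintype ι] [Fintype κ] [DecidableEq ι] [DecidableEq κ]

local notation "⟪" x ", " y "⟫" => @inner 𝕜 _ _ x y

omit [DecidableEq ι] in
lemma aux_sum_sq_pos {v : ι → 𝕜} (hv : v ≠ 0) : 0 < ∑ i, ‖v i‖ ^ 2 := by
  obtain ⟨i, hi⟩ := Function.ne_iff.1 hv
  exact Finset.sum_pos' (fun j _ => by positivity)
    ⟨i, Finset.mem_univ i, pow_pos (norm_pos_iff.mpr hi) 2⟩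

omit [DecidableEq ι] in
lemma aux_dot_smul_self_re (r : ℝ) (v : ι → 𝕜) :
    RCLike.re (star v ⬝ᵥ ((r : 𝕜) • v)) = r * ∑ i, ‖v i‖ ^ 2 := by
  have h : star v ⬝ᵥ ((r : 𝕜) • v) = (r : 𝕜) * (star v ⬝ᵥ v) := by
    simp only [dotProduct, Finset.mul_sum, Pi.smul_apply, smul_eq_mul]
    exact Finset.sum_congr rfl fun i _ => by ring
  rw [h]
  have h2 : star v ⬝ᵥ v = ((∑ i, ‖v i‖ ^ 2 : ℝ) : 𝕜) := by
    simp only [dotProduct, Pi.star_apply, RCLike.star_def, RCLike.conj_mul]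
    norm_cast
  rw [h2, ← RCLike.ofReal_mul, RCLike.ofReal_re]

omit [DecidableEq ι] in
lemma aux_eig_nonneg {G : Matrix ι ι 𝕜} (hG : G.PosSemidef) {r : ℝ} {v : ι → 𝕜}
    (hv : v ≠ 0) (heq : G *ᵥ v = (r : 𝕜) • v) : 0 ≤ r := by
  have h1 := hG.re_dotProduct_nonneg v
  rw [heq, aux_dot_smul_self_re] at h1
  nlinarith [aux_sum_sq_pos hv]

omit [DecidableEq ι] in
lemma aux_lamMin_le {G : Matrix ι ι 𝕜} (hG : G.PosSemidef) {r : ℝ} {v : ι → 𝕜}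
    (hv : v ≠ 0) (heq : G *ᵥ v = (r : 𝕜) • v) : lamMin G ≤ r :=
  csInf_le ⟨0, fun _ ⟨u, hu, hequ⟩ => aux_eig_nonneg hG hu hequ⟩ ⟨v, hv, heq⟩

omit [DecidableEq ι] in
lemma aux_lamMin_nonneg {G : Matrix ι ι 𝕜} (hG : G.PosSemidef) : 0 ≤ lamMin G :=
  Real.sInf_nonneg (fun _ ⟨u, hu, hequ⟩ => aux_eig_nonneg hG hu hequ)

lemma aux_dot_eigen_expand (H : Matrix ι ι 𝕜) (hH : H.IsHermitian) (x y : ι → 𝕜) :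
    star y ⬝ᵥ H *ᵥ x = ∑ i, (hH.eigenvalues i : 𝕜) *
      (⟪hH.eigenvectorBasis i, (WithLp.equiv 2 (ι → 𝕜)).symm x⟫ *
       ⟪(WithLp.equiv 2 (ι → 𝕜)).symm y, hH.eigenvectorBasis i⟫) := by
  set ex : EuclideanSpace 𝕜 ι := (WithLp.equiv 2 (ι → 𝕜)).symm x with hex
  set ey : EuclideanSpace 𝕜 ι := (WithLp.equiv 2 (ι → 𝕜)).symm y with hey
  have hT : ∀ i, Matrix.toEuclideanLin H (hH.eigenvectorBasis i)
      = (hH.eigenvalues i : 𝕜) • hH.eigenvectorBasis i := by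
    intro i
    apply (WithLp.equiv 2 (ι → 𝕜)).injective
    show H *ᵥ ⇑(hH.eigenvectorBasis i) = _
    rw [hH.mulVec_eigenvectorBasis i]; ext j
    simp [RCLike.real_smul_eq_coe_mul]
  have hTex : Matrix.toEuclideanLin H ex
      = ∑ i, (⟪hH.eigenvectorBasis i, ex⟫ * (hH.eigenvalues i : 𝕜)) • hH.eigenvectorBasis i := by
    conv_lhs => rw [← hH.eigenvectorBasis.sum_repr' ex]
    rw [map_sum]
    refine Finset.sum_congr rfl fun i _ => ?_
    rw [LinearMap.map_smul, hT i, smul_smul]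
  have h0 : star y ⬝ᵥ H *ᵥ x = ⟪ey, Matrix.toEuclideanLin H ex⟫ := by
    rw [EuclideanSpace.inner_eq_star_dotProduct, dotProduct_comm]; rfl
  rw [h0, hTex, inner_sum]
  refine Finset.sum_congr rfl fun i _ => ?_
  rw [inner_smul_right]; ring

lemma aux_parseval (b : OrthonormalBasis ι 𝕜 (EuclideanSpace 𝕜 ι)) (x : ι → 𝕜) :
    ∑ i, ‖⟪b i, (WithLp.equiv 2 (ι → 𝕜)).symm x⟫‖ ^ 2 = ∑ i, ‖x i‖ ^ 2 := by
  have h1 : ‖(WithLp.equiv 2 (ι → 𝕜)).symm x‖ = ‖b.repr ((WithLp.equiv 2 (ι → 𝕜)).symm x)‖ :=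
    (b.repr.norm_map _).symm
  have h2 : (∑ i, ‖x i‖ ^ 2) = ‖(WithLp.equiv 2 (ι → 𝕜)).symm x‖ ^ 2 := by
    rw [EuclideanSpace.norm_eq, Real.sq_sqrt (by positivity)]; rfl
  rw [h2, h1, EuclideanSpace.norm_eq, Real.sq_sqrt (by positivity)]
  simp_rw [b.repr_apply_apply]

lemma aux_eigvec_ne_zero {H : Matrix ι ι 𝕜} (hH : H.IsHermitian) (i : ι) :
    (⇑(hH.eigenvectorBasis i) : ι → 𝕜) ≠ 0 := by
  intro h
  have h2 : hH.eigenvectorBasis i = 0 := by ext j; exact congrFun h j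
  have := hH.eigenvectorBasis.orthonormal.1 i
  rw [h2] at this; simp at this

lemma aux_eigvec_eq {H : Matrix ι ι 𝕜} (hH : H.IsHermitian) (i : ι) :
    H *ᵥ ⇑(hH.eigenvectorBasis i) = ((hH.eigenvalues i : 𝕜)) • ⇑(hH.eigenvectorBasis i) := by
  rw [hH.mulVec_eigenvectorBasis i]; ext j
  simp [Pi.smul_apply, RCLike.real_smul_eq_coe_mul]

/-- If every (real) eigenvalue of the Hermitian matrix `H` has absolute value at most `B`,
then `|y* H x| ≤ B ‖x‖₂ ‖y‖₂`. -/
lemma aux_hermBound (H : Matrix ι ι 𝕜) (hH : H.IsHermitian) (B : ℝ) (hB : 0 ≤ B)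
    (hev : ∀ (r : ℝ) (u : ι → 𝕜), u ≠ 0 → H *ᵥ u = (r : 𝕜) • u → |r| ≤ B)
    (x y : ι → 𝕜) :
    ‖star y ⬝ᵥ H *ᵥ x‖ ≤ B * l2 x * l2 y := by
  set ex : EuclideanSpace 𝕜 ι := (WithLp.equiv 2 (ι → 𝕜)).symm x with hex
  set ey : EuclideanSpace 𝕜 ι := (WithLp.equiv 2 (ι → 𝕜)).symm y with hey
  have hevB : ∀ i, |hH.eigenvalues i| ≤ B := fun i =>
    hev _ _ (aux_eigvec_ne_zero hH i) (aux_eigvec_eq hH i)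
  rw [aux_dot_eigen_expand H hH x y, l2, l2]
  calc ‖∑ i, (hH.eigenvalues i : 𝕜) * (⟪hH.eigenvectorBasis i, ex⟫ * ⟪ey, hH.eigenvectorBasis i⟫)‖
      ≤ ∑ i, ‖(hH.eigenvalues i : 𝕜) * (⟪hH.eigenvectorBasis i, ex⟫ * ⟪ey, hH.eigenvectorBasis i⟫)‖ :=
        norm_sum_le _ _
    _ ≤ ∑ i, B * (‖⟪hH.eigenvectorBasis i, ex⟫‖ * ‖⟪hH.eigenvectorBasis i, ey⟫‖) := by
        refine Finset.sum_le_sum fun i _ => ?_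
        rw [norm_mul, norm_mul, RCLike.norm_ofReal,
          norm_inner_symm ey (hH.eigenvectorBasis i)]
        exact mul_le_mul_of_nonneg_right (hevB i) (by positivity)
    _ ≤ B * (Real.sqrt (∑ i, ‖⟪hH.eigenvectorBasis i, ex⟫‖^2)
          * Real.sqrt (∑ i, ‖⟪hH.eigenvectorBasis i, ey⟫‖^2)) := by
        rw [← Finset.mul_sum]
        exact mul_le_mul_of_nonneg_left (Real.sum_mul_le_sqrt_mul_sqrt _ _ _) hB
    _ = B * Real.sqrt (∑ i, ‖x i‖ ^ 2) * Real.sqrt (∑ i, ‖y i‖ ^ 2) := by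
        rw [aux_parseval hH.eigenvectorBasis x, aux_parseval hH.eigenvectorBasis y, mul_assoc]

lemma aux_rayleigh_lower {G : Matrix ι ι 𝕜} (hG : G.PosSemidef) (w : ι → 𝕜) :
    lamMin G * (∑ i, ‖w i‖ ^ 2) ≤ RCLike.re (star w ⬝ᵥ G *ᵥ w) := by
  rw [aux_dot_eigen_expand G hG.1 w w]
  set ew : EuclideanSpace 𝕜 ι := (WithLp.equiv 2 (ι → 𝕜)).symm w with hew
  have hterm : ∀ i, (hG.1.eigenvalues i : 𝕜) *
      (⟪hG.1.eigenvectorBasis i, ew⟫ * ⟪ew, hG.1.eigenvectorBasis i⟫)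
      = ((hG.1.eigenvalues i * ‖⟪hG.1.eigenvectorBasis i, ew⟫‖ ^ 2 : ℝ) : 𝕜) := by
    intro i
    rw [← inner_conj_symm ew (hG.1.eigenvectorBasis i), RCLike.mul_conj]
    push_cast; ring
  simp_rw [hterm]
  rw [← RCLike.ofReal_sum, RCLike.ofReal_re]
  have hlo : ∀ i, lamMin G ≤ hG.1.eigenvalues i := fun i =>
    aux_lamMin_le hG (aux_eigvec_ne_zero hG.1 i) (aux_eigvec_eq hG.1 i)
  calc lamMin G * (∑ i, ‖w i‖ ^ 2)
      = ∑ i, lamMin G * ‖⟪hG.1.eigenvectorBasis i, ew⟫‖ ^ 2 := by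
        rw [← Finset.mul_sum, aux_parseval hG.1.eigenvectorBasis w]
    _ ≤ ∑ i, hG.1.eigenvalues i * ‖⟪hG.1.eigenvectorBasis i, ew⟫‖ ^ 2 :=
        Finset.sum_le_sum fun i _ => mul_le_mul_of_nonneg_right (hlo i) (by positivity)

lemma aux_rayleigh_upper (G : Matrix ι ι 𝕜) (w : ι → 𝕜) :
    RCLike.re (star w ⬝ᵥ G *ᵥ w) ≤ specNorm G * (∑ i, ‖w i‖ ^ 2) := by
  set ew : EuclideanSpace 𝕜 ι := (WithLp.equiv 2 (ι → 𝕜)).symm w with hew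
  have h0 : star w ⬝ᵥ G *ᵥ w = ⟪ew, Matrix.toEuclideanLin G ew⟫ := by
    rw [EuclideanSpace.inner_eq_star_dotProduct, dotProduct_comm]; rfl
  have h2 : ‖Matrix.toEuclideanLin G ew‖ ≤ specNorm G * ‖ew‖ :=
    (LinearMap.toContinuousLinearMap (Matrix.toEuclideanLin G)).le_opNorm ew
  have h3 : ‖ew‖ ^ 2 = ∑ i, ‖w i‖ ^ 2 := by
    rw [EuclideanSpace.norm_eq, Real.sq_sqrt (by positivity)]; rfl
  calc RCLike.re (star w ⬝ᵥ G *ᵥ w) ≤ ‖star w ⬝ᵥ G *ᵥ w‖ := RCLike.re_le_norm _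
    _ = ‖⟪ew, Matrix.toEuclideanLin G ew⟫‖ := by rw [h0]
    _ ≤ ‖ew‖ * ‖Matrix.toEuclideanLin G ew‖ := norm_inner_le_norm _ _
    _ ≤ ‖ew‖ * (specNorm G * ‖ew‖) :=
        mul_le_mul_of_nonneg_left h2 (norm_nonneg _)
    _ = specNorm G * ‖ew‖ ^ 2 := by ring
    _ = specNorm G * ∑ i, ‖w i‖ ^ 2 := by rw [h3]

omit [DecidableEq ι] in
lemma aux_l2_mulVec_le (M : Matrix ι κ 𝕜) (x : κ → 𝕜) :
    l2 (M *ᵥ x) ≤ specNorm M * l2 x := by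
  have h1 : l2 (M *ᵥ x) = ‖(WithLp.equiv 2 (ι → 𝕜)).symm (M *ᵥ x)‖ := by
    rw [l2, EuclideanSpace.norm_eq]; rfl
  have h2 : l2 x = ‖(WithLp.equiv 2 (κ → 𝕜)).symm x‖ := by
    rw [l2, EuclideanSpace.norm_eq]; rfl
  rw [h1, h2]
  exact (LinearMap.toContinuousLinearMap (Matrix.toEuclideanLin M)).le_opNorm _

omit [Fintype ι] [DecidableEq ι] in
lemma aux_sum_restrict {M : Type*} [AddCommMonoid M] (J : Finset κ) (f : κ → M)
    (hf : ∀ j ∉ J, f j = 0) : ∑ j : {j // j ∈ J}, f j = ∑ j, f j := by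
  rw [Finset.sum_coe_sort J f]
  exact Finset.sum_subset (Finset.subset_univ J) fun j _ hj => hf j hj

/-- Extension of a vector indexed by `J` to the full index set, by zero. -/
def extFun (J : Finset κ) (v : {j // j ∈ J} → 𝕜) : κ → 𝕜 :=
  fun i => if h : i ∈ J then v ⟨i, h⟩ else 0

omit [Fintype ι] [DecidableEq ι] in
lemma aux_extFun_apply_mem (J : Finset κ) (v : {j // j ∈ J} → 𝕜) (j : {j // j ∈ J}) :
    extFun J v (j : κ) = v j := by
  simp only [extFun, dif_pos j.2]

omit [DecidableEq ι] in
lemma aux_mulVec_ext (D : Matrix ι κ 𝕜) (J : Finset κ) (v : {j // j ∈ J} → 𝕜) :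
    D *ᵥ extFun J v = cols D J *ᵥ v := by
  funext i
  show ∑ j, D i j * extFun J v j = ∑ j : {j // j ∈ J}, cols D J i j * v j
  rw [← aux_sum_restrict J (fun j => D i j * extFun J v j)
    (fun j hj => by simp [extFun, dif_neg hj])]
  exact Finset.sum_congr rfl fun j _ => by
    rw [aux_extFun_apply_mem]; rfl

omit [Fintype ι] [DecidableEq ι] in
lemma aux_l2_ext (J : Finset κ) (v : {j // j ∈ J} → 𝕜) :
    ∑ i, ‖extFun J v i‖ ^ 2 = ∑ j, ‖v j‖ ^ 2 := by
  rw [← aux_sum_restrict J (fun j => ‖extFun J v j‖ ^ 2)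
    (fun j hj => by simp [extFun, dif_neg hj])]
  exact Finset.sum_congr rfl fun j _ => by rw [aux_extFun_apply_mem]

omit [Fintype ι] [DecidableEq ι] in
lemma aux_dot_ext (J : Finset κ) (x y : {j // j ∈ J} → 𝕜) :
    star (extFun J y) ⬝ᵥ extFun J x = star y ⬝ᵥ x := by
  show ∑ j, star (extFun J y) j * extFun J x j = ∑ j : {j // j ∈ J}, star y j * x j
  rw [← aux_sum_restrict J (fun j => star (extFun J y) j * extFun J x j)
    (fun j hj => by simp [extFun, dif_neg hj])]
  exact Finset.sum_congr rfl fun j _ => by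
    simp only [Pi.star_apply, aux_extFun_apply_mem]

lemma aux_dot_BhGB {d' : Type*} [Fintype d'] [DecidableEq d'] (B : Matrix d' κ 𝕜)
    (G : Matrix d' d' 𝕜) (x y : κ → 𝕜) :
    star y ⬝ᵥ (Bᴴ * G * B) *ᵥ x = star (B *ᵥ y) ⬝ᵥ G *ᵥ (B *ᵥ x) := by
  rw [Matrix.mul_assoc, ← Matrix.mulVec_mulVec,
    ← Matrix.mulVec_mulVec, Matrix.dotProduct_mulVec, ← Matrix.star_mulVec]

end Aux

set_option maxHeartbeats 1600000 in
open scoped ComplexOrder in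
/-- eigenvalue bounds for `D_J^* G D_J` and the resulting bound on
`θ_s(D^* G D)`. -/
theorem statement18 (d n s : ℕ) (G : Matrix (Fin d) (Fin d) 𝕜) (hG : G.PosSemidef)
    (D : Matrix (Fin d) (Fin n) 𝕜) :
    (∀ J : Finset (Fin n), J.card ≤ s →
      ∀ (lam : ℝ) (v : {i // i ∈ J} → 𝕜), v ≠ 0 →
        ((cols D J)ᴴ * G * cols D J).mulVec v = (lam : 𝕜) • v →
        lamMin G * (1 - ric s D) ≤ lam ∧ lam ≤ specNorm G * (1 + ric s D)) ∧
      (ric s D < 1 →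
        theta s (Dᴴ * G * D) ≤
          max (specNorm G * (1 + ric s D) - 1) (1 - lamMin G * (1 - ric s D))) := by
  have hsD : 0 ≤ specNorm D := norm_nonneg _
  have hgnn : 0 ≤ specNorm G := norm_nonneg _
  set δS : Set ℝ := {δ : ℝ | 0 ≤ δ ∧ ∀ x : Fin n → 𝕜, Sparse s x →
    (1 - δ) * l2 x ^ 2 ≤ l2 (D.mulVec x) ^ 2 ∧
      l2 (D.mulVec x) ^ 2 ≤ (1 + δ) * l2 x ^ 2} with hδS
  have hricdef : ric s D = sInf δS := rfl
  have hSne : δS.Nonempty := by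
    refine ⟨specNorm D ^ 2 + 1, ⟨by positivity, ?_⟩⟩
    intro x _
    have h1 : l2 (D *ᵥ x) ≤ specNorm D * l2 x := aux_l2_mulVec_le D x
    have hx0 : 0 ≤ l2 x := Real.sqrt_nonneg _
    have hDx0 : 0 ≤ l2 (D *ᵥ x) := Real.sqrt_nonneg _
    constructor
    · nlinarith [sq_nonneg (l2 x), sq_nonneg (l2 (D *ᵥ x)),
        mul_nonneg (mul_nonneg hsD hsD) (mul_nonneg hx0 hx0)]
    · nlinarith [pow_le_pow_left₀ hDx0 h1 2, sq_nonneg (l2 x)]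
  have ht0 : 0 ≤ ric s D := by
    rw [hricdef]; exact Real.sInf_nonneg (fun δ hδ => hδ.1)
  have hpart1 : ∀ J : Finset (Fin n), J.card ≤ s →
      ∀ (lam : ℝ) (v : {i // i ∈ J} → 𝕜), v ≠ 0 →
        ((cols D J)ᴴ * G * cols D J).mulVec v = (lam : 𝕜) • v →
        lamMin G * (1 - ric s D) ≤ lam ∧ lam ≤ specNorm G * (1 + ric s D) := by
    intro J hJ lam v hv heig
    have hxs : Sparse s (extFun J v) := by
      refine ⟨J, hJ, fun i hne => ?_⟩
      by_contra hmem
      exact hne (by simp [extFun, dif_neg hmem])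
    have hDx : D *ᵥ extFun J v = cols D J *ᵥ v := aux_mulVec_ext D J v
    set c := ∑ j, ‖v j‖ ^ 2 with hc
    have hcpos : 0 < c := aux_sum_sq_pos hv
    set w := cols D J *ᵥ v with hw
    set W := ∑ i, ‖w i‖ ^ 2 with hWdef
    have hW0 : 0 ≤ W := by positivity
    have hquad : star v ⬝ᵥ ((cols D J)ᴴ * G * cols D J) *ᵥ v = star w ⬝ᵥ G *ᵥ w :=
      aux_dot_BhGB (cols D J) G v v
    have hE1 : lam * c = RCLike.re (star w ⬝ᵥ G *ᵥ w) := by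
      rw [← hquad]
      show lam * c = RCLike.re (star v ⬝ᵥ ((cols D J)ᴴ * G * cols D J).mulVec v)
      rw [heig, aux_dot_smul_self_re]
    have hE2l : lamMin G * W ≤ lam * c := by rw [hE1]; exact aux_rayleigh_lower hG w
    have hE2u : lam * c ≤ specNorm G * W := by rw [hE1]; exact aux_rayleigh_upper G w
    have hE3 : ∀ δ ∈ δS, (1 - δ) * c ≤ W ∧ W ≤ (1 + δ) * c := by
      intro δ hδ
      have h := hδ.2 (extFun J v) hxs
      have hl2x : l2 (extFun J v) ^ 2 = c := by
        rw [l2, Real.sq_sqrt (by positivity), aux_l2_ext]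
      have hl2w : l2 (D.mulVec (extFun J v)) ^ 2 = W := by
        rw [show D.mulVec (extFun J v) = w from hDx, l2, Real.sq_sqrt (by positivity)]
      rw [hl2x, hl2w] at h
      exact h
    have hlam0 : 0 ≤ lam := by
      have h0 : 0 ≤ RCLike.re (star w ⬝ᵥ G *ᵥ w) := hG.re_dotProduct_nonneg w
      nlinarith [hE1, hcpos]
    constructor
    · have hm := aux_lamMin_nonneg hG
      rcases eq_or_lt_of_le hm with hm0 | hmpos
      · rw [← hm0]; simpa using hlam0
      · have hkey : (lamMin G - lam) / lamMin G ≤ ric s D := by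
          rw [hricdef]
          apply le_csInf hSne
          intro δ hδ
          have h3 := (hE3 δ hδ).1
          have h5 : lamMin G * ((1 - δ) * c) ≤ lamMin G * W :=
            mul_le_mul_of_nonneg_left h3 hm
          have h4 : lamMin G * (1 - δ) ≤ lam := by nlinarith
          rw [div_le_iff₀ hmpos]; nlinarith
        have h5 : lamMin G - lam ≤ ric s D * lamMin G := (div_le_iff₀ hmpos).mp hkey
        nlinarith
    · rcases eq_or_lt_of_le hgnn with hg0 | hgpos
      · have h6 : lam * c ≤ 0 := by
          refine hE2u.trans ?_
          rw [← hg0]; simp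
        have : lam ≤ 0 := by nlinarith
        rw [← hg0]; nlinarith
      · have hkey : lam / specNorm G - 1 ≤ ric s D := by
          rw [hricdef]
          apply le_csInf hSne
          intro δ hδ
          have h3 := (hE3 δ hδ).2
          have h5 : specNorm G * W ≤ specNorm G * ((1 + δ) * c) :=
            mul_le_mul_of_nonneg_left h3 hgnn
          have h4 : lam ≤ specNorm G * (1 + δ) := by nlinarith
          have h7 : lam / specNorm G ≤ 1 + δ := by
            rw [div_le_iff₀ hgpos]; nlinarith
          linarith
        have h5 : lam / specNorm G ≤ 1 + ric s D := by linarith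
        have h6 : lam ≤ (1 + ric s D) * specNorm G := (div_le_iff₀ hgpos).mp h5
        nlinarith
  refine ⟨hpart1, ?_⟩
  intro hric
  set t := ric s D with htdef
  set gg := specNorm G with hgdef
  set m := lamMin G with hmdef
  set B := max (gg * (1 + t) - 1) (1 - m * (1 - t)) with hB
  have hB0 : 0 ≤ B := by
    by_cases hcase : m * (1 - t) ≤ 1
    · exact le_trans (by linarith) (le_max_right (gg * (1 + t) - 1) (1 - m * (1 - t)))
    · push_neg at hcase
      have hmpos : 0 < m := by nlinarith
      have hSetne : {r : ℝ | ∃ v : Fin d → 𝕜, v ≠ 0 ∧ G.mulVec v = (r : 𝕜) • v}.Nonempty := by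
        by_contra h
        rw [Set.not_nonempty_iff_eq_empty] at h
        have hz : lamMin G = 0 := by
          rw [lamMin, h, Real.sInf_empty]
        rw [hmdef, hz] at hmpos
        exact lt_irrefl _ hmpos
      obtain ⟨r, v, hv, heq⟩ := hSetne
      have h1 : m ≤ r := aux_lamMin_le hG hv heq
      have hr0 : 0 ≤ r := aux_eig_nonneg hG hv heq
      have h2 : r ≤ gg := by
        have hg1 : l2 (G *ᵥ v) ≤ gg * l2 v := aux_l2_mulVec_le G v
        have hl : l2 (G *ᵥ v) = r * l2 v := by
          show Real.sqrt (∑ i, ‖(G *ᵥ v) i‖ ^ 2) = r * Real.sqrt (∑ i, ‖v i‖ ^ 2)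
          have hterm : ∀ i, ‖(G *ᵥ v) i‖ ^ 2 = r ^ 2 * ‖v i‖ ^ 2 := by
            intro i
            rw [show G *ᵥ v = G.mulVec v from rfl, heq]
            simp [Pi.smul_apply, norm_smul, RCLike.norm_ofReal, abs_of_nonneg hr0]
            ring
          simp_rw [hterm]
          rw [← Finset.mul_sum, Real.sqrt_mul (by positivity), Real.sqrt_sq hr0]
        have hlv : 0 < l2 v := Real.sqrt_pos.mpr (aux_sum_sq_pos hv)
        nlinarith
      have h3 : 0 ≤ gg * (1 + t) - 1 := by nlinarith
      exact h3.trans (le_max_left _ _)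
  refine csInf_le ⟨0, fun δ hδ => hδ.1⟩ ⟨hB0, ?_⟩
  intro J hJ x y hx hy
  set xr : {i // i ∈ J} → 𝕜 := fun j => x j with hxr
  set yr : {i // i ∈ J} → 𝕜 := fun j => y j with hyr
  have hxe : extFun J xr = x := by
    funext i
    by_cases h : i ∈ J
    · simp [extFun, dif_pos h, hxr]
    · have hx0 : x i = 0 := by
        by_contra hne; exact h (hx i hne)
      simp [extFun, dif_neg h, hx0]
  have hye : extFun J yr = y := by
    funext i
    by_cases h : i ∈ J
    · simp [extFun, dif_pos h, hyr]
    · have hy0 : y i = 0 := by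
        by_contra hne; exact h (hy i hne)
      simp [extFun, dif_neg h, hy0]
  set A := (cols D J)ᴴ * G * cols D J with hA
  have hHerm : (A - 1).IsHermitian :=
    ((hG.conjTranspose_mul_mul_same (cols D J)).1).sub Matrix.isHermitian_one
  have heigbd : ∀ (r : ℝ) (u : {i // i ∈ J} → 𝕜), u ≠ 0 →
      (A - 1) *ᵥ u = (r : 𝕜) • u → |r| ≤ B := by
    intro r u hu hequ
    have hAu : A.mulVec u = ((r + 1 : ℝ) : 𝕜) • u := by
      rw [Matrix.sub_mulVec, Matrix.one_mulVec] at hequ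
      have h7 : A *ᵥ u = (r : 𝕜) • u + u := sub_eq_iff_eq_add.mp hequ
      rw [show A.mulVec u = A *ᵥ u from rfl, h7]
      funext i
      push_cast
      simp only [Pi.add_apply, Pi.smul_apply, smul_eq_mul]
      ring
    obtain ⟨hlo, hhi⟩ := hpart1 J hJ (r + 1) u hu hAu
    rw [abs_le]
    constructor
    · have := le_max_right (gg * (1 + t) - 1) (1 - m * (1 - t))
      rw [← hB] at this
      linarith
    · have := le_max_left (gg * (1 + t) - 1) (1 - m * (1 - t))
      rw [← hB] at this
      linarith
  have hmain : star y ⬝ᵥ (Dᴴ * G * D).mulVec x - star y ⬝ᵥ x = star yr ⬝ᵥ (A - 1) *ᵥ xr := by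
    rw [Matrix.sub_mulVec, Matrix.one_mulVec, dotProduct_sub]
    congr 1
    · rw [hA, aux_dot_BhGB (cols D J) G xr yr,
        show (Dᴴ * G * D).mulVec x = (Dᴴ * G * D) *ᵥ x from rfl,
        aux_dot_BhGB D G x y,
        ← aux_mulVec_ext D J xr, ← aux_mulVec_ext D J yr, hxe, hye]
    · rw [← hxe, ← hye, aux_dot_ext]
  have hlx : l2 xr = l2 x := by
    rw [l2, l2, ← hxe, aux_l2_ext]
  have hly : l2 yr = l2 y := by
    rw [l2, l2, ← hye, aux_l2_ext]
  calc ‖star y ⬝ᵥ (Dᴴ * G * D).mulVec x - star y ⬝ᵥ x‖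
      = ‖star yr ⬝ᵥ (A - 1) *ᵥ xr‖ := by rw [hmain]
    _ ≤ B * l2 xr * l2 yr := aux_hermBound (A - 1) hHerm B hB0 heigbd xr yr
    _ = B * l2 x * l2 y := by rw [hlx, hly]

end ObliquePursuit
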